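/- Let f: ℝ^{d₁} × ℝ^{d₂} → ℝ be twice continuously differentiable and let (x*,y*) be a local minimax point of f. Then ∇²_{yy} f(x*,y*) is negative semidefinite. Moreover, if ∇²_{yy} f(x*,y*) is negative definite, then the Schur complement [∇²_{xx} f − ∇²_{xy} f (∇²_{yy} f)^{-1} ∇²_{yx} f](x*,y*) is positive semidefinite. -/

import Mathlib

open Metric Filter Set Matrix

noncomputable section

/-- `(xs, ys)` is a local minimax point of `f`. -/
def IsLocalMinimax {d₁ d₂ : ℕ}
    (f : EuclideanSpace ℝ (Fin d₁) → EuclideanSpace ℝ (Fin d₂) → ℝ)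
    (xs : EuclideanSpace ℝ (Fin d₁)) (ys : EuclideanSpace ℝ (Fin d₂)) : Prop :=
  ∃ δ₀ > (0 : ℝ), ∃ h : ℝ → ℝ,
    (∀ δ ∈ Set.Ioc (0 : ℝ) δ₀, 0 ≤ h δ) ∧
    Tendsto h (nhdsWithin 0 (Set.Ioi 0)) (nhds 0) ∧
    ∀ δ ∈ Set.Ioc (0 : ℝ) δ₀, ∀ x y,
      ‖x - xs‖ ≤ δ → ‖y - ys‖ ≤ δ →
        f xs y ≤ f xs ys ∧ f xs ys ≤ sSup (f x '' closedBall ys (h δ))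

/-- The partial Hessian matrix `∇²_{xx} f (xs, ys)`. -/
def hessXX {d₁ d₂ : ℕ}
    (f : EuclideanSpace ℝ (Fin d₁) → EuclideanSpace ℝ (Fin d₂) → ℝ)
    (xs : EuclideanSpace ℝ (Fin d₁)) (ys : EuclideanSpace ℝ (Fin d₂)) :
    Matrix (Fin d₁) (Fin d₁) ℝ :=
  Matrix.of fun i j =>
    fderiv ℝ (fun x => fderiv ℝ (fun x' => f x' ys) x) xs
      (EuclideanSpace.single i 1) (EuclideanSpace.single j 1)

/-- The partial Hessian matrix `∇²_{yy} f (xs, ys)`. -/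
def hessYY {d₁ d₂ : ℕ}
    (f : EuclideanSpace ℝ (Fin d₁) → EuclideanSpace ℝ (Fin d₂) → ℝ)
    (xs : EuclideanSpace ℝ (Fin d₁)) (ys : EuclideanSpace ℝ (Fin d₂)) :
    Matrix (Fin d₂) (Fin d₂) ℝ :=
  Matrix.of fun i j =>
    fderiv ℝ (fun y => fderiv ℝ (f xs) y) ys
      (EuclideanSpace.single i 1) (EuclideanSpace.single j 1)

/-- The mixed partial Hessian matrix `∇²_{xy} f (xs, ys)` (so that
`∇²_{yx} f = (∇²_{xy} f)ᵀ`). -/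
def hessXY {d₁ d₂ : ℕ}
    (f : EuclideanSpace ℝ (Fin d₁) → EuclideanSpace ℝ (Fin d₂) → ℝ)
    (xs : EuclideanSpace ℝ (Fin d₁)) (ys : EuclideanSpace ℝ (Fin d₂)) :
    Matrix (Fin d₁) (Fin d₂) ℝ :=
  Matrix.of fun i j =>
    fderiv ℝ (fun x => fderiv ℝ (f x) ys) xs
      (EuclideanSpace.single i 1) (EuclideanSpace.single j 1)

section Aux

variable {G : Type*} [NormedAddCommGroup G] [NormedSpace ℝ G]

theorem bilin_symm {f : G → ℝ} (hf : ContDiff ℝ 2 f) (z : G) (v w : G) :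
    fderiv ℝ (fderiv ℝ f) z v w = fderiv ℝ (fderiv ℝ f) z w v := by
  have hd : Differentiable ℝ f := hf.differentiable (by norm_num)
  have h1 : ContDiff ℝ 1 (fderiv ℝ f) := hf.fderiv_right (by norm_num)
  exact second_derivative_symmetric (fun y => (hd y).hasFDerivAt)
    ((h1.differentiable (by norm_num) z).hasFDerivAt) v w

theorem quad_approx {f : G → ℝ} (hf : ContDiff ℝ 2 f) (z : G) {ε : ℝ} (hε : 0 < ε) :
    ∃ r > 0, ∀ w : G, ‖w‖ ≤ r →
      |f (z + w) - f z - fderiv ℝ f z w - fderiv ℝ (fderiv ℝ f) z w w / 2| ≤ ε * ‖w‖ ^ 2 := by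
  have hd : Differentiable ℝ f := hf.differentiable (by norm_num)
  have h1 : ContDiff ℝ 1 (fderiv ℝ f) := hf.fderiv_right (by norm_num)
  have hd1 : Differentiable ℝ (fderiv ℝ f) := h1.differentiable (by norm_num)
  have hc : Continuous (fderiv ℝ (fderiv ℝ f)) := h1.continuous_fderiv (by norm_num)
  set D := fderiv ℝ f with hD
  set B := fderiv ℝ (fderiv ℝ f) z with hB
  obtain ⟨r, hr, hball⟩ : ∃ r > 0, ∀ p, ‖p - z‖ ≤ r → ‖fderiv ℝ D p - B‖ ≤ ε := by
    obtain ⟨δ, hδ, hδ'⟩ := (Metric.continuousAt_iff (f := fderiv ℝ D) (a := z)).mp (by exact hc.continuousAt) ε hε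
    refine ⟨δ / 2, by positivity, fun p hp => ?_⟩
    have := hδ' (show dist p z < δ by rw [dist_eq_norm]; linarith)
    calc ‖fderiv ℝ D p - B‖ = dist (fderiv ℝ D p) B := (dist_eq_norm (fderiv ℝ D p) B).symm
    _ ≤ ε := by exact this.le
  have key : ∀ v : G, ‖v‖ ≤ r →
      HasFDerivAt (fun t : G => D (z + t)) (fderiv ℝ D (z + v)) v := by
    intro v hv
    have := ((hd1 (z + v)).hasFDerivAt.comp v ((hasFDerivAt_id v).const_add z))
    simp at this; exact this
  have step1 : ∀ v : G, ‖v‖ ≤ r → ‖D (z + v) - D z - B v‖ ≤ ε * ‖v‖ := by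
    intro v hv
    have hderiv : ∀ u ∈ closedBall (0 : G) r,
        HasFDerivWithinAt (fun t => D (z + t) - B t) (fderiv ℝ D (z + u) - B)
          (closedBall 0 r) u := by
      intro u hu
      rw [mem_closedBall, dist_zero_right] at hu
      exact ((key u hu).sub B.hasFDerivAt).hasFDerivWithinAt
    have hbound : ∀ u ∈ closedBall (0 : G) r, ‖fderiv ℝ D (z + u) - B‖ ≤ ε := by
      intro u hu
      rw [mem_closedBall, dist_zero_right] at hu
      exact hball _ (by simpa using hu)
    have h0m : (0 : G) ∈ closedBall (0 : G) r := mem_closedBall_self hr.le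
    have hvm : v ∈ closedBall (0 : G) r := by
      rw [mem_closedBall, dist_zero_right]; exact hv
    have := (convex_closedBall (0 : G) r).norm_image_sub_le_of_norm_hasFDerivWithin_le
      hderiv hbound h0m hvm
    simp only [map_zero, add_zero, sub_zero] at this
    calc ‖D (z + v) - D z - B v‖ = ‖D (z + v) - B v - D z‖ := by rw [sub_right_comm]
    _ ≤ ε * ‖v‖ := by simpa using this
  refine ⟨r, hr, fun w hw => ?_⟩
  have hBsymm : ∀ v u : G, B v u = B u v := bilin_symm hf z
  have hψ : ∀ u ∈ closedBall (0 : G) ‖w‖,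
      HasFDerivWithinAt (fun t => f (z + t) - D z t - (1 / 2 : ℝ) * (B t t))
        (D (z + u) - D z - B u) (closedBall 0 ‖w‖) u := by
    intro u hu
    rw [mem_closedBall, dist_zero_right] at hu
    have hur : ‖u‖ ≤ r := hu.trans hw
    have h1' : HasFDerivAt (fun t : G => f (z + t)) (D (z + u)) u := by
      have := ((hd (z + u)).hasFDerivAt.comp u ((hasFDerivAt_id u).const_add z))
      simp at this; exact this
    have h2' : HasFDerivAt (fun t : G => D z t) (D z) u := (D z).hasFDerivAt
    have h3' : HasFDerivAt (fun t : G => (1 / 2 : ℝ) * (B t t)) (B u) u := by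
      have hbb : HasFDerivAt (fun p : G × G => B p.1 p.2)
          (B.isBoundedBilinearMap.deriv (u, u)) (u, u) :=
        B.isBoundedBilinearMap.hasFDerivAt (u, u)
      have hdiag : HasFDerivAt (fun t : G => (t, t))
          ((ContinuousLinearMap.id ℝ G).prod (ContinuousLinearMap.id ℝ G)) u :=
        HasFDerivAt.prodMk (hasFDerivAt_id u) (hasFDerivAt_id u)
      have hcomp := (HasFDerivAt.comp (f := fun t : G => (t, t)) u hbb hdiag).const_mul
        (1 / 2 : ℝ)
      refine hcomp.congr_fderiv ?_
      ext v
      have : B u v + B v u = 2 * B u v := by rw [hBsymm v u]; ring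
      simp [ContinuousLinearMap.comp_apply, IsBoundedBilinearMap.deriv_apply, this]
    exact ((h1'.sub h2').sub h3').hasFDerivWithinAt
  have hbound2 : ∀ u ∈ closedBall (0 : G) ‖w‖, ‖D (z + u) - D z - B u‖ ≤ ε * ‖w‖ := by
    intro u hu
    rw [mem_closedBall, dist_zero_right] at hu
    exact (step1 u (hu.trans hw)).trans (by nlinarith [norm_nonneg u, hε.le])
  have h0m : (0 : G) ∈ closedBall (0 : G) ‖w‖ := mem_closedBall_self (norm_nonneg w)
  have hwm : w ∈ closedBall (0 : G) ‖w‖ := by rw [mem_closedBall, dist_zero_right]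
  have := (convex_closedBall (0 : G) ‖w‖).norm_image_sub_le_of_norm_hasFDerivWithin_le
    hψ hbound2 h0m hwm
  rw [show f (z + w) - f z - D z w - B w w / 2
      = f (z + w) - D z w - (1 / 2 : ℝ) * (B w w) - (f z - (1 / 2 : ℝ) * (B 0 0)) from by
        simp; ring, ← Real.norm_eq_abs,
    show ε * ‖w‖ ^ 2 = ε * ‖w‖ * ‖w‖ from by ring]
  simpa using this

theorem euclid_expand {n : ℕ} {W : Type*} [NormedAddCommGroup W] [NormedSpace ℝ W]
    (T : EuclideanSpace ℝ (Fin n) →L[ℝ] W) (v : EuclideanSpace ℝ (Fin n)) :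
    T v = ∑ i, v i • T (EuclideanSpace.single i 1) := by
  conv_lhs => rw [← (EuclideanSpace.basisFun (Fin n) ℝ).sum_repr v]
  rw [map_sum]
  refine Finset.sum_congr rfl fun i _ => ?_
  rw [EuclideanSpace.basisFun_repr, EuclideanSpace.basisFun_apply, T.map_smul]

theorem bilin_expand {G' : Type*} [NormedAddCommGroup G'] [NormedSpace ℝ G'] {n m : ℕ}
    (B : G' →L[ℝ] G' →L[ℝ] ℝ) (φ : EuclideanSpace ℝ (Fin n) →L[ℝ] G')
    (ψ : EuclideanSpace ℝ (Fin m) →L[ℝ] G')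
    (v : EuclideanSpace ℝ (Fin n)) (w : EuclideanSpace ℝ (Fin m)) :
    B (φ v) (ψ w) = ∑ i, ∑ j, v i * w j *
      B (φ (EuclideanSpace.single i 1)) (ψ (EuclideanSpace.single j 1)) := by
  have h1 : B (φ v) = ∑ i, v i • B (φ (EuclideanSpace.single i 1)) := by
    simpa using euclid_expand (B.comp φ) v
  rw [h1, ContinuousLinearMap.sum_apply]
  refine Finset.sum_congr rfl fun i _ => ?_
  rw [ContinuousLinearMap.smul_apply]
  have h2 : B (φ (EuclideanSpace.single i 1)) (ψ w)
      = ∑ j, w j • B (φ (EuclideanSpace.single i 1)) (ψ (EuclideanSpace.single j 1)) := by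
    simpa using euclid_expand ((B (φ (EuclideanSpace.single i 1))).comp ψ) w
  rw [h2, Finset.smul_sum]
  refine Finset.sum_congr rfl fun j _ => ?_
  simp only [smul_eq_mul]
  ring

theorem key_sq {n : ℕ} {N : Matrix (Fin n) (Fin n) ℝ} (hN : N.PosDef)
    (b e : Fin n → ℝ) (t : ℝ) :
    t * (b ⬝ᵥ e) - (e ⬝ᵥ (N *ᵥ e)) / 2 ≤ t ^ 2 * (b ⬝ᵥ (N⁻¹ *ᵥ b)) / 2 := by
  have hdet : IsUnit N.det := isUnit_iff_ne_zero.mpr (ne_of_gt hN.det_pos)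
  have hNT : Nᵀ = N := by
    have := hN.isHermitian
    rwa [Matrix.IsHermitian, Matrix.conjTranspose_eq_transpose_of_trivial] at this
  have fact1 : N *ᵥ (N⁻¹ *ᵥ b) = b := by
    rw [Matrix.mulVec_mulVec, Matrix.mul_nonsing_inv _ hdet, Matrix.one_mulVec]
  have fact2 : (N⁻¹ *ᵥ b) ⬝ᵥ (N *ᵥ e) = b ⬝ᵥ e := by
    rw [Matrix.dotProduct_mulVec, ← Matrix.mulVec_transpose, hNT, fact1]
  have fact3 : e ⬝ᵥ (N *ᵥ (N⁻¹ *ᵥ b)) = b ⬝ᵥ e := by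
    rw [fact1, dotProduct_comm]
  have fact4 : (N⁻¹ *ᵥ b) ⬝ᵥ (N *ᵥ (N⁻¹ *ᵥ b)) = b ⬝ᵥ (N⁻¹ *ᵥ b) := by
    rw [fact1, dotProduct_comm]
  have hpos := hN.posSemidef.dotProduct_mulVec_nonneg (e - t • (N⁻¹ *ᵥ b))
  simp only [star_trivial, Matrix.mulVec_sub, Matrix.mulVec_smul,
    sub_dotProduct, dotProduct_sub, smul_dotProduct,
    dotProduct_smul, smul_eq_mul, fact2, fact3, fact4] at hpos
  nlinarith [hpos]

theorem sq_sum_eq {n : ℕ} (e : EuclideanSpace ℝ (Fin n)) : ‖e‖ ^ 2 = ∑ i, e i ^ 2 := by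
  rw [EuclideanSpace.norm_eq, Real.sq_sqrt (by positivity)]
  refine Finset.sum_congr rfl fun i _ => ?_
  rw [Real.norm_eq_abs, sq_abs]

theorem dot_expand {n m : ℕ} (M : Matrix (Fin n) (Fin m) ℝ) (x : Fin n → ℝ) (y : Fin m → ℝ) :
    x ⬝ᵥ (M *ᵥ y) = ∑ i, ∑ j, x i * y j * M i j := by
  simp only [dotProduct, Matrix.mulVec, Finset.mul_sum]
  exact Finset.sum_congr rfl fun i _ => Finset.sum_congr rfl fun j _ => by ring

theorem coord_cont {n : ℕ} (i : Fin n) :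
    Continuous fun v : EuclideanSpace ℝ (Fin n) => v i :=
  (continuous_apply i).comp (PiLp.continuous_ofLp _ _)

theorem lambda_bound {n : ℕ} {M : Matrix (Fin n) (Fin n) ℝ} (hM : M.PosDef) :
    ∃ lam > (0 : ℝ), ∀ e : EuclideanSpace ℝ (Fin n),
      lam * ‖e‖ ^ 2 ≤ ∑ i, ∑ j, e i * e j * M i j := by
  rcases Nat.eq_zero_or_pos n with hn | hn
  · subst hn
    refine ⟨1, one_pos, fun e => ?_⟩
    have h1 : ‖e‖ ^ 2 = ∑ i, e i ^ 2 := sq_sum_eq e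
    simp at h1 ⊢
    simp [h1]
  · set q : EuclideanSpace ℝ (Fin n) → ℝ := fun v => ∑ i, ∑ j, v i * v j * M i j with hq
    have hqc : Continuous q := by
      refine continuous_finset_sum _ fun i _ => continuous_finset_sum _ fun j _ => ?_
      exact ((coord_cont i).mul (coord_cont j)).mul continuous_const
    have i0 : Fin n := ⟨0, hn⟩
    haveI : Nontrivial (EuclideanSpace ℝ (Fin n)) := by
      refine ⟨0, EuclideanSpace.single i0 1, fun heq => zero_ne_one (α := ℝ) ?_⟩
      have := congrArg (fun v : EuclideanSpace ℝ (Fin n) => v i0) heq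
      simpa [EuclideanSpace.single_apply] using this
    obtain ⟨m0, hm0, hmin⟩ := (isCompact_sphere (0 : EuclideanSpace ℝ (Fin n)) 1).exists_isMinOn
      (NormedSpace.sphere_nonempty.mpr zero_le_one) hqc.continuousOn
    have hm0n : ‖m0‖ = 1 := by rwa [mem_sphere_zero_iff_norm] at hm0
    have hm0ne : (fun i => m0 i) ≠ (0 : Fin n → ℝ) := by
      intro hx0
      have h2 : ‖m0‖ ^ 2 = 0 := by
        rw [sq_sum_eq]
        refine Finset.sum_eq_zero fun i _ => ?_
        have := congrFun hx0 i
        simp only [Pi.zero_apply] at this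
        rw [this]; ring
      rw [hm0n] at h2; norm_num at h2
    have hlam : 0 < q m0 := by
      have := hM.dotProduct_mulVec_pos hm0ne
      simp only [star_trivial] at this
      rwa [dot_expand] at this
    refine ⟨q m0, hlam, fun e => ?_⟩
    rcases eq_or_ne e 0 with rfl | he
    · simp [hq]
    · have hc : (0 : ℝ) < ‖e‖ := norm_pos_iff.mpr he
      have hvs : (‖e‖⁻¹ • e) ∈ sphere (0 : EuclideanSpace ℝ (Fin n)) 1 := by
        rw [mem_sphere_zero_iff_norm, norm_smul, norm_inv, norm_norm]
        field_simp
      have hle : q m0 ≤ q (‖e‖⁻¹ • e) := hmin hvs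
      have hqv : q (‖e‖⁻¹ • e) = ‖e‖⁻¹ ^ 2 * q e := by
        simp only [hq, PiLp.smul_apply, smul_eq_mul, Finset.mul_sum]
        exact Finset.sum_congr rfl fun i _ => Finset.sum_congr rfl fun j _ => by ring
      have : q m0 ≤ ‖e‖⁻¹ ^ 2 * q e := by rwa [hqv] at hle
      have h2 : q m0 * ‖e‖ ^ 2 ≤ q e := by
        have h3 := mul_le_mul_of_nonneg_right this (le_of_lt (pow_pos hc 2))
        calc q m0 * ‖e‖ ^ 2 ≤ ‖e‖⁻¹ ^ 2 * q e * ‖e‖ ^ 2 := h3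
        _ = q e := by field_simp
      exact h2

theorem limit_est {d₂ : ℕ} (Cm : Matrix (Fin d₂) (Fin d₂) ℝ) (hdet : IsUnit (-Cm).det)
    (a : ℝ) (b : Fin d₂ → ℝ) (nU : ℝ) (lam : ℝ) (hlam : 0 < lam)
    (hK : ∀ ε : ℝ, 0 < ε → 2 * ε < lam →
      0 ≤ a / 2 + (b ⬝ᵥ ((((-Cm) - (2 * ε) • 1)⁻¹) *ᵥ b)) / 2 + ε * nU) :
    0 ≤ a / 2 + (b ⬝ᵥ ((-Cm)⁻¹ *ᵥ b)) / 2 := by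
  set Nm : ℝ → Matrix (Fin d₂) (Fin d₂) ℝ := fun ε => (-Cm) - (2 * ε) • 1 with hNmdef
  set Kf : ℝ → ℝ := fun ε => a / 2 + (b ⬝ᵥ ((Nm ε)⁻¹ *ᵥ b)) / 2 + ε * nU with hKfdef
  have hNmc : Continuous Nm := by
    rw [hNmdef]
    exact continuous_const.sub ((continuous_const.mul continuous_id).smul continuous_const)
  have h30 : Nm 0 = -Cm := by rw [hNmdef]; norm_num
  have hinv : ContinuousAt (fun ε : ℝ => (Nm ε)⁻¹) 0 := by
    have h2 : ContinuousAt Inv.inv (Nm 0) := by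
      rw [h30]
      exact continuousAt_matrix_inv _ (NormedRing.inverse_continuousAt hdet.unit)
    exact h2.comp hNmc.continuousAt
  have hdotc : Continuous (fun M : Matrix (Fin d₂) (Fin d₂) ℝ => b ⬝ᵥ (M *ᵥ b)) := by
    show Continuous fun M : Matrix (Fin d₂) (Fin d₂) ℝ => ∑ i, b i * ∑ j, M i j * b j
    refine continuous_finset_sum _ fun i _ => Continuous.mul continuous_const ?_
    refine continuous_finset_sum _ fun j _ => Continuous.mul ?_ continuous_const
    exact (continuous_apply j).comp (continuous_apply i)
  have hKc : ContinuousAt Kf 0 := by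
    rw [hKfdef]
    refine ContinuousAt.add (ContinuousAt.add continuousAt_const ?_) ?_
    · exact ((hdotc.continuousAt.comp hinv).div_const 2)
    · exact (continuous_id.mul continuous_const).continuousAt
  have hKtend : Tendsto Kf (nhdsWithin 0 (Set.Ioi 0)) (nhds (Kf 0)) :=
    hKc.tendsto.mono_left nhdsWithin_le_nhds
  have hK00 : Kf 0 = a / 2 + (b ⬝ᵥ ((-Cm)⁻¹ *ᵥ b)) / 2 := by
    show a / 2 + (b ⬝ᵥ ((Nm 0)⁻¹ *ᵥ b)) / 2 + 0 * nU = _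
    rw [h30]; ring
  have hevK : ∀ᶠ ε in nhdsWithin 0 (Set.Ioi 0), 0 ≤ Kf ε := by
    filter_upwards [Ioo_mem_nhdsGT_of_mem
      (show (0 : ℝ) ∈ Set.Ico 0 (lam / 2) from ⟨le_rfl, by linarith⟩)] with ε hε
    exact hK ε hε.1 (by linarith [hε.2])
  have hfin := ge_of_tendsto hKtend hevK
  rwa [hK00] at hfin

set_option maxHeartbeats 4000000 in
theorem main_est {d₁ d₂ : ℕ}
    (F2 : EuclideanSpace ℝ (Fin d₁) × EuclideanSpace ℝ (Fin d₂) → ℝ)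
    (xs : EuclideanSpace ℝ (Fin d₁)) (ys : EuclideanSpace ℝ (Fin d₂))
    (L : EuclideanSpace ℝ (Fin d₁) × EuclideanSpace ℝ (Fin d₂) →L[ℝ] ℝ)
    (B : EuclideanSpace ℝ (Fin d₁) × EuclideanSpace ℝ (Fin d₂) →L[ℝ]
      (EuclideanSpace ℝ (Fin d₁) × EuclideanSpace ℝ (Fin d₂)) →L[ℝ] ℝ)
    (hBsymm : ∀ v w, B v w = B w v)
    (hquad : ∀ ε : ℝ, 0 < ε → ∃ r > 0, ∀ w, ‖w‖ ≤ r →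
      |F2 ((xs, ys) + w) - F2 (xs, ys) - L w - B w w / 2| ≤ ε * ‖w‖ ^ 2)
    (hDy : ∀ e : EuclideanSpace ℝ (Fin d₂), L ((0 : EuclideanSpace ℝ (Fin d₁)), e) = 0)
    (δ₀ : ℝ) (hδ₀ : 0 < δ₀) (h : ℝ → ℝ) (hh0 : ∀ δ ∈ Set.Ioc (0:ℝ) δ₀, 0 ≤ h δ)
    (hhtend : Tendsto h (nhdsWithin 0 (Set.Ioi 0)) (nhds 0))
    (hkey2 : ∀ δ ∈ Set.Ioc (0:ℝ) δ₀, ∀ x, ‖x - xs‖ ≤ δ →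
      F2 (xs, ys) ≤ sSup ((fun y => F2 (x, y)) '' closedBall ys (h δ)))
    (Cm : Matrix (Fin d₂) (Fin d₂) ℝ)
    (hYYe : ∀ i j, Cm i j
      = B ((0 : EuclideanSpace ℝ (Fin d₁)), EuclideanSpace.single i 1)
          ((0 : EuclideanSpace ℝ (Fin d₁)), EuclideanSpace.single j 1))
    (lam : ℝ)
    (hNpd : ∀ ε : ℝ, 0 < ε → 2 * ε < lam →
      ((-Cm) - (2 * ε) • (1 : Matrix (Fin d₂) (Fin d₂) ℝ)).PosDef)
    (U : EuclideanSpace ℝ (Fin d₁)) (ε η : ℝ) (hε : 0 < ε) (hε2 : 2 * ε < lam) (hη : 0 < η) :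
    ∃ δ : ℝ, 0 < δ ∧ δ ≤ η ∧
      0 ≤ δ * L (U, 0) + δ ^ 2 *
        (B (U, (0 : EuclideanSpace ℝ (Fin d₂))) (U, 0) / 2
         + ((fun j => B (U, 0) ((0 : EuclideanSpace ℝ (Fin d₁)), EuclideanSpace.single j 1)) ⬝ᵥ
            ((((-Cm) - (2 * ε) • 1)⁻¹) *ᵥ
             (fun j => B (U, 0) ((0 : EuclideanSpace ℝ (Fin d₁)), EuclideanSpace.single j 1)))) / 2
         + ε * ‖U‖ ^ 2) := by
  set inr' := ContinuousLinearMap.inr ℝ (EuclideanSpace ℝ (Fin d₁)) (EuclideanSpace ℝ (Fin d₂))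
    with hinr'
  set bvec : Fin d₂ → ℝ :=
    fun j => B (U, 0) ((0 : EuclideanSpace ℝ (Fin d₁)), EuclideanSpace.single j 1) with hbvec
  set Nε : Matrix (Fin d₂) (Fin d₂) ℝ := (-Cm) - (2 * ε) • 1 with hNε
  set Kc : ℝ := B (U, (0 : EuclideanSpace ℝ (Fin d₂))) (U, 0) / 2
    + (bvec ⬝ᵥ (Nε⁻¹ *ᵥ bvec)) / 2 + ε * ‖U‖ ^ 2 with hKc
  obtain ⟨r, hr, happrox⟩ := hquad ε hε
  have hxxsum : ∀ x : Fin d₂ → ℝ, x ⬝ᵥ x = ∑ i, x i ^ 2 := by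
    intro x; simp [dotProduct, sq]
  set M := min η (min (δ₀ / (‖U‖ + 1)) (r / (‖U‖ + 1))) with hMdef
  have hM0 : 0 < M := lt_min hη (lt_min (by positivity) (by positivity))
  have htend2 : Tendsto (fun δ : ℝ => (‖U‖ + 1) * δ) (nhdsWithin 0 (Set.Ioi 0))
      (nhdsWithin 0 (Set.Ioi 0)) := by
    rw [tendsto_nhdsWithin_iff]
    constructor
    · have hcont : Tendsto (fun δ : ℝ => (‖U‖ + 1) * δ) (nhds 0) (nhds ((‖U‖ + 1) * 0)) :=
        (continuous_const.mul continuous_id).tendsto 0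
      rw [mul_zero] at hcont
      exact hcont.mono_left nhdsWithin_le_nhds
    · filter_upwards [self_mem_nhdsWithin] with δ hδ
      exact mul_pos (by positivity : (0:ℝ) < ‖U‖ + 1) hδ
  have htend3 : Tendsto (fun δ : ℝ => h ((‖U‖ + 1) * δ)) (nhdsWithin 0 (Set.Ioi 0)) (nhds 0) :=
    hhtend.comp htend2
  have hev1 : ∀ᶠ δ in nhdsWithin 0 (Set.Ioi 0), h ((‖U‖ + 1) * δ) < r :=
    htend3.eventually_lt_const hr
  have hev2 : ∀ᶠ δ in nhdsWithin 0 (Set.Ioi 0), δ ∈ Set.Ioo (0 : ℝ) M :=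
    eventually_of_mem (Ioo_mem_nhdsGT_of_mem ⟨le_refl 0, hM0⟩) fun x hx => hx
  obtain ⟨δ, hδr, hδ0, hδM⟩ := (hev1.and hev2).exists
  have hδη : δ ≤ η := le_of_lt (lt_of_lt_of_le hδM (min_le_left _ _))
  have hUpos : (0 : ℝ) < ‖U‖ + 1 := by positivity
  set dh := (‖U‖ + 1) * δ with hdhdef
  have hdh0 : 0 < dh := mul_pos hUpos hδ0
  have hδδ₀ : δ < δ₀ / (‖U‖ + 1) :=
    lt_of_lt_of_le hδM (le_trans (min_le_right _ _) (min_le_left _ _))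
  have hδr' : δ < r / (‖U‖ + 1) :=
    lt_of_lt_of_le hδM (le_trans (min_le_right _ _) (min_le_right _ _))
  have hdhδ₀ : dh ≤ δ₀ := by
    rw [hdhdef]
    calc (‖U‖ + 1) * δ ≤ (‖U‖ + 1) * (δ₀ / (‖U‖ + 1)) :=
          mul_le_mul_of_nonneg_left hδδ₀.le hUpos.le
    _ = δ₀ := by field_simp
  have hδUr : δ * ‖U‖ ≤ r := by
    have h5 : δ * (‖U‖ + 1) ≤ r := by
      rw [mul_comm]
      calc (‖U‖ + 1) * δ ≤ (‖U‖ + 1) * (r / (‖U‖ + 1)) :=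
            mul_le_mul_of_nonneg_left hδr'.le hUpos.le
      _ = r := by field_simp
    linarith [hδ0]
  have hhr : h dh < r := hδr
  have hh0dh : 0 ≤ h dh := hh0 dh ⟨hdh0, hdhδ₀⟩
  have hxnorm : ‖(xs + δ • U) - xs‖ ≤ dh := by
    rw [add_sub_cancel_left, norm_smul, Real.norm_eq_abs, abs_of_pos hδ0, hdhdef]
    linarith [hδ0]
  have hsup := hkey2 dh ⟨hdh0, hdhδ₀⟩ (xs + δ • U) hxnorm
  have hub : ∀ y' ∈ closedBall ys (h dh),
      F2 (xs + δ • U, y') ≤ F2 (xs, ys) + δ * L (U, 0) + δ ^ 2 * Kc := by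
    intro y' hy'
    set e : EuclideanSpace ℝ (Fin d₂) := y' - ys with hedef
    have hen : ‖e‖ ≤ h dh := by
      rw [mem_closedBall, dist_eq_norm] at hy'
      exact hy'
    have henr : ‖e‖ ≤ r := le_of_lt (lt_of_le_of_lt hen hhr)
    set w : EuclideanSpace ℝ (Fin d₁) × EuclideanSpace ℝ (Fin d₂) := (δ • U, e) with hwdef
    have hδUn : ‖δ • U‖ = δ * ‖U‖ := by
      rw [norm_smul, Real.norm_eq_abs, abs_of_pos hδ0]
    have hwr : ‖w‖ ≤ r := by
      rw [hwdef, Prod.norm_def]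
      exact max_le (by rw [hδUn]; exact hδUr) henr
    have happ := (abs_le.mp (happrox w hwr)).2
    have hzw : (xs, ys) + w = (xs + δ • U, y') := by
      rw [hwdef, Prod.ext_iff]
      exact ⟨rfl, by show ys + e = y'; rw [hedef, add_sub_cancel]⟩
    rw [hzw] at happ
    have hwsplit : w = δ • ((U, (0 : EuclideanSpace ℝ (Fin d₂))))
        + (((0 : EuclideanSpace ℝ (Fin d₁))), e) := by
      rw [hwdef, Prod.smul_mk, smul_zero, Prod.mk_add_mk, add_zero, zero_add]
    have hDw : L w = δ * L (U, 0) := by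
      rw [hwsplit, map_add, _root_.map_smul, hDy e, add_zero, smul_eq_mul]
    have hβ : B (U, (0 : EuclideanSpace ℝ (Fin d₂))) ((0 : EuclideanSpace ℝ (Fin d₁)), e)
        = bvec ⬝ᵥ (fun i => e i) := by
      have hT := euclid_expand ((B ((U, (0 : EuclideanSpace ℝ (Fin d₂))))).comp inr') e
      simp only [ContinuousLinearMap.comp_apply, hinr', ContinuousLinearMap.inr_apply,
        smul_eq_mul] at hT
      rw [hT, dotProduct]
      exact Finset.sum_congr rfl fun j _ => by rw [hbvec]; ring
    have hγe : B ((0 : EuclideanSpace ℝ (Fin d₁)), e) ((0 : EuclideanSpace ℝ (Fin d₁)), e)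
        = ∑ i, ∑ j, e i * e j * Cm i j := by
      have hBE := bilin_expand B inr' inr' e e
      simp only [hinr', ContinuousLinearMap.inr_apply] at hBE
      rw [hBE]
      exact Finset.sum_congr rfl fun i _ => Finset.sum_congr rfl fun j _ => by rw [hYYe]
    have hBw : B w w = δ ^ 2 * B (U, (0 : EuclideanSpace ℝ (Fin d₂))) (U, 0)
        + 2 * δ * (bvec ⬝ᵥ (fun i => e i))
        + ∑ i, ∑ j, e i * e j * Cm i j := by
      rw [hwsplit]
      simp only [map_add, _root_.map_smul, ContinuousLinearMap.add_apply,
        ContinuousLinearMap.smul_apply, smul_eq_mul]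
      rw [hBsymm (((0 : EuclideanSpace ℝ (Fin d₁))), e) ((U, (0 : EuclideanSpace ℝ (Fin d₂))))]
      rw [hβ, hγe]
      ring
    have hwnorm : ‖w‖ ^ 2 ≤ δ ^ 2 * ‖U‖ ^ 2 + ∑ i, e i ^ 2 := by
      rw [← sq_sum_eq e, hwdef, Prod.norm_def, hδUn]
      rcases le_total (δ * ‖U‖) ‖e‖ with hc | hc
      · rw [max_eq_right hc]
        linarith [sq_nonneg (δ * ‖U‖)]
      · rw [max_eq_left hc]
        linarith [sq_nonneg ‖e‖]
    have hkq := key_sq (hNpd ε hε hε2) bvec (fun i => e i) δ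
    have hNe : (fun i => e i) ⬝ᵥ (Nε *ᵥ (fun i => e i))
        = -(∑ i, ∑ j, e i * e j * Cm i j) - (2 * ε) * (∑ i, e i ^ 2) := by
      simp only [hNε, Matrix.sub_mulVec, dotProduct_sub, smul_mulVec,
        Matrix.one_mulVec, dotProduct_smul, smul_eq_mul]
      congr 1
      · rw [Matrix.neg_mulVec, dotProduct_neg, dot_expand]
      · rw [hxxsum]
    rw [← hNε] at hkq
    rw [hNe] at hkq
    have hεw : ε * ‖w‖ ^ 2 ≤ ε * (δ ^ 2 * ‖U‖ ^ 2 + ∑ i, e i ^ 2) :=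
      mul_le_mul_of_nonneg_left hwnorm hε.le
    rw [hDw, hBw] at happ
    rw [hKc]
    linarith [happ, hεw, hkq]
  have hne : ((fun y => F2 (xs + δ • U, y)) '' closedBall ys (h dh)).Nonempty :=
    (Metric.nonempty_closedBall.mpr hh0dh).image _
  have hsup2 : sSup ((fun y => F2 (xs + δ • U, y)) '' closedBall ys (h dh))
      ≤ F2 (xs, ys) + δ * L (U, 0) + δ ^ 2 * Kc := by
    apply csSup_le hne
    rintro t ⟨y', hy', rfl⟩
    exact hub y' hy'
  have hchain : F2 (xs, ys) ≤ F2 (xs, ys) + δ * L (U, 0) + δ ^ 2 * Kc :=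
    le_trans hsup hsup2
  exact ⟨δ, hδ0, hδη, by linarith⟩

theorem npd_aux {d₂ : ℕ} (Cm : Matrix (Fin d₂) (Fin d₂) ℝ) (hherm : Cm.IsHermitian)
    (lam : ℝ) (hlamb' : ∀ x : Fin d₂ → ℝ, lam * (∑ i, x i ^ 2) ≤ x ⬝ᵥ ((-Cm) *ᵥ x))
    (hsum_pos : ∀ x : Fin d₂ → ℝ, x ≠ 0 → 0 < ∑ i, x i ^ 2)
    (ε : ℝ) (hε : 0 < ε) (hε2 : 2 * ε < lam) :
    ((-Cm) - (2 * ε) • (1 : Matrix (Fin d₂) (Fin d₂) ℝ)).PosDef := by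
  refine PosDef.of_dotProduct_mulVec_pos ?_ ?_
  · refine Matrix.IsHermitian.sub hherm.neg ?_
    rw [Matrix.IsHermitian, Matrix.conjTranspose_smul, Matrix.conjTranspose_one, star_trivial]
  · intro x hx
    have hstar : star x = x := funext fun i => star_trivial _
    rw [hstar]
    have hxxsum : x ⬝ᵥ x = ∑ i, x i ^ 2 := by simp [dotProduct, sq]
    have hx2 : x ⬝ᵥ ((((-Cm) - (2 * ε) • 1) : Matrix (Fin d₂) (Fin d₂) ℝ) *ᵥ x)
        = x ⬝ᵥ ((-Cm) *ᵥ x) - (2 * ε) * (∑ i, x i ^ 2) := by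
      simp only [Matrix.sub_mulVec, dotProduct_sub, smul_mulVec,
        Matrix.one_mulVec, dotProduct_smul, smul_eq_mul]
      rw [hxxsum]
    rw [hx2]
    have h3 := hlamb' x
    have h4 := hsum_pos x hx
    have h5 : 0 < (lam - 2 * ε) * (∑ i, x i ^ 2) := mul_pos (by linarith) h4
    nlinarith [h3, h5]

theorem small_delta_nonneg {c K : ℝ}
    (hex : ∀ η : ℝ, 0 < η → ∃ δ : ℝ, 0 < δ ∧ δ ≤ η ∧ 0 ≤ δ * c + δ ^ 2 * K) : 0 ≤ c := by
  by_contra hneg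
  push_neg at hneg
  set η := (-c) / (2 * (|K| + 1)) with hηdef
  have hη0 : 0 < η := div_pos (by linarith) (by positivity)
  obtain ⟨δ, hδ0, hδη, hineq⟩ := hex η hη0
  have h3 : 0 ≤ c + δ * K := by nlinarith [hineq, hδ0]
  have h4 : δ * K ≤ δ * |K| := mul_le_mul_of_nonneg_left (le_abs_self K) hδ0.le
  have h5 : δ * |K| ≤ η * (|K| + 1) := mul_le_mul hδη (by linarith) (abs_nonneg K) hη0.le
  have h6 : η * (2 * (|K| + 1)) = -c := by
    rw [hηdef]
    exact div_mul_cancel₀ _ (by positivity)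
  nlinarith [h3, h4, h5, h6]

theorem delta_sq_nonneg {K : ℝ} (δ : ℝ) (hδ : 0 < δ) (hineq : 0 ≤ δ * 0 + δ ^ 2 * K) :
    0 ≤ K := by nlinarith [hineq, mul_pos hδ hδ]

end Aux

set_option maxHeartbeats 4000000 in
/-- Second-order necessary condition for local minimax points: at a local
minimax point of a twice continuously differentiable `f`, `∇²_{yy} f` is
negative semidefinite; moreover, if `∇²_{yy} f` is negative definite then the
Schur complement `∇²_{xx} f - ∇²_{xy} f (∇²_{yy} f)⁻¹ ∇²_{yx} f` is positive
semidefinite. -/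
theorem stmt_8 {d₁ d₂ : ℕ}
    (f : EuclideanSpace ℝ (Fin d₁) → EuclideanSpace ℝ (Fin d₂) → ℝ)
    (hf : ContDiff ℝ 2
      (fun p : EuclideanSpace ℝ (Fin d₁) × EuclideanSpace ℝ (Fin d₂) => f p.1 p.2))
    (xs : EuclideanSpace ℝ (Fin d₁)) (ys : EuclideanSpace ℝ (Fin d₂))
    (hmm : IsLocalMinimax f xs ys) :
    (-(hessYY f xs ys)).PosSemidef ∧
    ((-(hessYY f xs ys)).PosDef →
      (hessXX f xs ys -
        hessXY f xs ys * (hessYY f xs ys)⁻¹ * (hessXY f xs ys)ᵀ).PosSemidef) := by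
  classical
  obtain ⟨δ₀, hδ₀, h, hh0, hhtend, hkey⟩ := hmm
  set F2 : EuclideanSpace ℝ (Fin d₁) × EuclideanSpace ℝ (Fin d₂) → ℝ :=
    fun p => f p.1 p.2 with hF2def
  have hd : Differentiable ℝ F2 := hf.differentiable (by norm_num)
  have h1 : ContDiff ℝ 1 (fderiv ℝ F2) := hf.fderiv_right (by norm_num)
  have hd1 : Differentiable ℝ (fderiv ℝ F2) := h1.differentiable (by norm_num)
  set D : _ → _ := fderiv ℝ F2 with hDdef
  set B := fderiv ℝ (fderiv ℝ F2) (xs, ys) with hBdef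
  have hBsymm : ∀ v w, B v w = B w v := bilin_symm hf (xs, ys)
  set inr' := ContinuousLinearMap.inr ℝ (EuclideanSpace ℝ (Fin d₁)) (EuclideanSpace ℝ (Fin d₂))
    with hinr'
  set inl' := ContinuousLinearMap.inl ℝ (EuclideanSpace ℝ (Fin d₁)) (EuclideanSpace ℝ (Fin d₂))
    with hinl'
  -- inner derivative identifications
  have hinnerY : ∀ x y, fderiv ℝ (f x) y = (D (x, y)).comp inr' := by
    intro x y
    exact (HasFDerivAt.comp (f := fun y' => (x, y')) y (hd (x, y)).hasFDerivAt
      (hasFDerivAt_prodMk_right x y)).fderiv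
  have hinnerX : ∀ x y, fderiv ℝ (fun x' => f x' y) x = (D (x, y)).comp inl' := by
    intro x y
    exact (HasFDerivAt.comp (f := fun x' => (x', y)) x (hd (x, y)).hasFDerivAt
      (hasFDerivAt_prodMk_left x y)).fderiv
  set pR : ((EuclideanSpace ℝ (Fin d₁) × EuclideanSpace ℝ (Fin d₂)) →L[ℝ] ℝ) →L[ℝ]
      (EuclideanSpace ℝ (Fin d₂) →L[ℝ] ℝ) :=
    (ContinuousLinearMap.compL ℝ (EuclideanSpace ℝ (Fin d₂))
      (EuclideanSpace ℝ (Fin d₁) × EuclideanSpace ℝ (Fin d₂)) ℝ).flip inr' with hpR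
  set pL : ((EuclideanSpace ℝ (Fin d₁) × EuclideanSpace ℝ (Fin d₂)) →L[ℝ] ℝ) →L[ℝ]
      (EuclideanSpace ℝ (Fin d₁) →L[ℝ] ℝ) :=
    (ContinuousLinearMap.compL ℝ (EuclideanSpace ℝ (Fin d₁))
      (EuclideanSpace ℝ (Fin d₁) × EuclideanSpace ℝ (Fin d₂)) ℝ).flip inl' with hpL
  have houterYY : fderiv ℝ (fun y => fderiv ℝ (f xs) y) ys = pR.comp (B.comp inr') := by
    have h0 : (fun y => fderiv ℝ (f xs) y) = fun y => pR (D (xs, y)) := by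
      funext y; rw [hinnerY xs y]; rfl
    rw [h0]
    have h1' : HasFDerivAt (fun y => D (xs, y)) (B.comp inr') ys :=
      HasFDerivAt.comp (g := D) (f := fun y' => (xs, y')) ys (hd1 (xs, ys)).hasFDerivAt
        (hasFDerivAt_prodMk_right xs ys)
    exact (pR.hasFDerivAt.comp ys h1').fderiv
  have houterXY : fderiv ℝ (fun x => fderiv ℝ (f x) ys) xs = pR.comp (B.comp inl') := by
    have h0 : (fun x => fderiv ℝ (f x) ys) = fun x => pR (D (x, ys)) := by
      funext x; rw [hinnerY x ys]; rfl
    rw [h0]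
    have h1' : HasFDerivAt (fun x => D (x, ys)) (B.comp inl') xs :=
      HasFDerivAt.comp (g := D) (f := fun x' => (x', ys)) xs (hd1 (xs, ys)).hasFDerivAt
        (hasFDerivAt_prodMk_left xs ys)
    exact (pR.hasFDerivAt.comp xs h1').fderiv
  have houterXX : fderiv ℝ (fun x => fderiv ℝ (fun x' => f x' ys) x) xs
      = pL.comp (B.comp inl') := by
    have h0 : (fun x => fderiv ℝ (fun x' => f x' ys) x) = fun x => pL (D (x, ys)) := by
      funext x; rw [hinnerX x ys]; rfl
    rw [h0]
    have h1' : HasFDerivAt (fun x => D (x, ys)) (B.comp inl') xs :=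
      HasFDerivAt.comp (g := D) (f := fun x' => (x', ys)) xs (hd1 (xs, ys)).hasFDerivAt
        (hasFDerivAt_prodMk_left xs ys)
    exact (pL.hasFDerivAt.comp xs h1').fderiv
  have hYYe : ∀ i j, hessYY f xs ys i j
      = B (0, EuclideanSpace.single i 1) (0, EuclideanSpace.single j 1) := by
    intro i j
    show fderiv ℝ (fun y => fderiv ℝ (f xs) y) ys
      (EuclideanSpace.single i 1) (EuclideanSpace.single j 1) = _
    rw [houterYY]
    simp [hpR, hinr', hinl']
  have hXYe : ∀ i j, hessXY f xs ys i j
      = B (EuclideanSpace.single i 1, 0) (0, EuclideanSpace.single j 1) := by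
    intro i j
    show fderiv ℝ (fun x => fderiv ℝ (f x) ys) xs
      (EuclideanSpace.single i 1) (EuclideanSpace.single j 1) = _
    rw [houterXY]
    simp [hpR, hinr', hinl']
  have hXXe : ∀ i j, hessXX f xs ys i j
      = B (EuclideanSpace.single i 1, 0) (EuclideanSpace.single j 1, 0) := by
    intro i j
    show fderiv ℝ (fun x => fderiv ℝ (fun x' => f x' ys) x) xs
      (EuclideanSpace.single i 1) (EuclideanSpace.single j 1) = _
    rw [houterXX]
    simp [hpL, hinr', hinl']
  -- stationarity in y
  have hmaxY : IsLocalMax (f xs) ys := by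
    have hm : ∀ y, ‖y - ys‖ ≤ δ₀ → f xs y ≤ f xs ys := fun y hy =>
      (hkey δ₀ ⟨hδ₀, le_rfl⟩ xs y (by simpa using hδ₀.le) hy).1
    filter_upwards [Metric.closedBall_mem_nhds ys hδ₀] with y hy
    exact hm y (by rwa [mem_closedBall, dist_eq_norm] at hy)
  have hDy : ∀ e : EuclideanSpace ℝ (Fin d₂), D (xs, ys) ((0 : EuclideanSpace ℝ (Fin d₁)), e) = 0 := by
    intro e
    have h0 := hmaxY.fderiv_eq_zero
    rw [hinnerY xs ys] at h0
    have h2 := congrArg (fun L : EuclideanSpace ℝ (Fin d₂) →L[ℝ] ℝ => L e) h0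
    simpa [hinr'] using h2
  -- negative semidefiniteness of hessYY
  have hγ : ∀ e : EuclideanSpace ℝ (Fin d₂),
      B ((0 : EuclideanSpace ℝ (Fin d₁)), e) ((0 : EuclideanSpace ℝ (Fin d₁)), e) ≤ 0 := by
    intro e
    rcases eq_or_ne e 0 with rfl | he
    · have : ((0 : EuclideanSpace ℝ (Fin d₁)), (0 : EuclideanSpace ℝ (Fin d₂)))
        = (0 : EuclideanSpace ℝ (Fin d₁) × EuclideanSpace ℝ (Fin d₂)) := rfl
      rw [this]
      simp
    · have hepos : 0 < ‖e‖ := norm_pos_iff.mpr he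
      by_contra hcon
      push_neg at hcon
      set c := B ((0 : EuclideanSpace ℝ (Fin d₁)), e) ((0 : EuclideanSpace ℝ (Fin d₁)), e)
        with hcdef
      set ε := c / (4 * ‖e‖ ^ 2) with hεdef
      have hεpos : 0 < ε := by positivity
      obtain ⟨r, hr, happrox⟩ := quad_approx hf (xs, ys) hεpos
      set t := min (r / ‖e‖) (δ₀ / ‖e‖) with htdef
      have htpos : 0 < t := lt_min (by positivity) (by positivity)
      set w : EuclideanSpace ℝ (Fin d₁) × EuclideanSpace ℝ (Fin d₂) :=
        ((0 : EuclideanSpace ℝ (Fin d₁)), t • e) with hwdef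
      have hwn : ‖w‖ = t * ‖e‖ := by
        rw [hwdef, Prod.norm_def]
        simp [norm_smul, abs_of_pos htpos, le_of_lt (mul_pos htpos hepos)]
      have hte_r : t * ‖e‖ ≤ r := by
        calc t * ‖e‖ ≤ (r / ‖e‖) * ‖e‖ :=
              mul_le_mul_of_nonneg_right (min_le_left _ _) (norm_nonneg e)
        _ = r := by field_simp
      have hte_δ : t * ‖e‖ ≤ δ₀ := by
        calc t * ‖e‖ ≤ (δ₀ / ‖e‖) * ‖e‖ :=
              mul_le_mul_of_nonneg_right (min_le_right _ _) (norm_nonneg e)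
        _ = δ₀ := by field_simp
      have happ := happrox w (by rw [hwn]; exact hte_r)
      have hzw : (xs, ys) + w = (xs, ys + t • e) := by
        rw [hwdef, Prod.ext_iff]
        constructor <;> simp
      rw [hzw] at happ
      have hfle : F2 (xs, ys + t • e) ≤ F2 (xs, ys) := by
        have hyn : ‖(ys + t • e) - ys‖ ≤ δ₀ := by
          rw [add_sub_cancel_left, norm_smul, Real.norm_eq_abs, abs_of_pos htpos]
          exact hte_δ
        exact (hkey δ₀ ⟨hδ₀, le_rfl⟩ xs (ys + t • e) (by simpa using hδ₀.le) hyn).1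
      have hDzw : D (xs, ys) w = 0 := hDy (t • e)
      have hBww : B w w = t ^ 2 * c := by
        have hw2 : w = t • (((0 : EuclideanSpace ℝ (Fin d₁)), e)) := by
          rw [hwdef, Prod.smul_mk, smul_zero]
        rw [hw2, B.map_smul, ContinuousLinearMap.smul_apply, (B _).map_smul]
        simp only [smul_eq_mul, hcdef]
        ring
      rw [hDzw, hBww, hwn] at happ
      have habs := (abs_le.mp happ).1
      have h5 : ε * (t * ‖e‖) ^ 2 = t ^ 2 * (c / 4) := by
        rw [hεdef]; field_simp
      linarith [habs, hfle, h5, mul_pos (pow_pos htpos 2) hcon]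
  have hCherm : (hessYY f xs ys).IsHermitian := by
    rw [Matrix.IsHermitian, Matrix.conjTranspose_eq_transpose_of_trivial]
    ext i j
    rw [Matrix.transpose_apply, hYYe, hYYe]
    exact hBsymm _ _
  have hquadC : ∀ x : Fin d₂ → ℝ,
      B ((0 : EuclideanSpace ℝ (Fin d₁)), (WithLp.equiv 2 (Fin d₂ → ℝ)).symm x)
        ((0 : EuclideanSpace ℝ (Fin d₁)), (WithLp.equiv 2 (Fin d₂ → ℝ)).symm x)
      = x ⬝ᵥ (hessYY f xs ys *ᵥ x) := by
    intro x
    set v := (WithLp.equiv 2 (Fin d₂ → ℝ)).symm x with hv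
    have hBE := bilin_expand B inr' inr' v v
    simp only [hinr', ContinuousLinearMap.inr_apply] at hBE
    rw [hBE, dot_expand]
    refine Finset.sum_congr rfl fun i _ => Finset.sum_congr rfl fun j _ => ?_
    rw [hYYe]
    rfl
  constructor
  · refine PosSemidef.of_dotProduct_mulVec_nonneg hCherm.neg fun x => ?_
    have hstar : star x = x := funext fun i => star_trivial _
    rw [hstar]
    have h2 : x ⬝ᵥ ((-(hessYY f xs ys)) *ᵥ x) = -(x ⬝ᵥ (hessYY f xs ys *ᵥ x)) := by
      rw [Matrix.neg_mulVec, dotProduct_neg]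
    rw [h2, ← hquadC x]
    linarith [hγ ((WithLp.equiv 2 (Fin d₂ → ℝ)).symm x)]
  · intro hPD
    set Cm := hessYY f xs ys with hCmdef
    set Am := hessXX f xs ys with hAmdef
    set Bm := hessXY f xs ys with hBmdef
    clear_value Cm Am Bm
    obtain ⟨lam, hlam, hlamb⟩ := lambda_bound hPD
    have hsum_pos : ∀ x : Fin d₂ → ℝ, x ≠ 0 → 0 < ∑ i, x i ^ 2 := by
      intro x hx
      obtain ⟨i, hi⟩ := Function.ne_iff.mp hx
      exact Finset.sum_pos' (fun j _ => sq_nonneg _) ⟨i, Finset.mem_univ i,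
        pow_two_pos_of_ne_zero hi⟩
    have hlamb' : ∀ x : Fin d₂ → ℝ, lam * (∑ i, x i ^ 2) ≤ x ⬝ᵥ ((-Cm) *ᵥ x) := by
      intro x
      have h2 := hlamb ((WithLp.equiv 2 (Fin d₂ → ℝ)).symm x)
      rw [sq_sum_eq] at h2
      rw [dot_expand]
      exact h2
    have hxxsum : ∀ x : Fin d₂ → ℝ, x ⬝ᵥ x = ∑ i, x i ^ 2 := by
      intro x; simp [dotProduct, sq]
    have hNpd : ∀ ε : ℝ, 0 < ε → 2 * ε < lam →
        ((-Cm) - (2 * ε) • (1 : Matrix (Fin d₂) (Fin d₂) ℝ)).PosDef :=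
      fun ε hε hε2 => npd_aux Cm hCherm lam hlamb' hsum_pos ε hε hε2
    have hquad : ∀ ε : ℝ, 0 < ε → ∃ r > 0,
        ∀ w : EuclideanSpace ℝ (Fin d₁) × EuclideanSpace ℝ (Fin d₂), ‖w‖ ≤ r →
        |F2 ((xs, ys) + w) - F2 (xs, ys) - D (xs, ys) w - B w w / 2| ≤ ε * ‖w‖ ^ 2 :=
      fun ε hε => quad_approx hf (xs, ys) hε
    have hkey2 : ∀ δ ∈ Ioc (0 : ℝ) δ₀, ∀ x, ‖x - xs‖ ≤ δ →
        F2 (xs, ys) ≤ sSup ((fun y => F2 (x, y)) '' closedBall ys (h δ)) := by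
      intro δ hδ x hx
      exact (hkey δ hδ x ys hx (by simpa using hδ.1.le)).2
    set Kfun : EuclideanSpace ℝ (Fin d₁) → ℝ → ℝ := fun U ε =>
      B (U, (0 : EuclideanSpace ℝ (Fin d₂))) (U, 0) / 2
      + ((fun j => B (U, 0) ((0 : EuclideanSpace ℝ (Fin d₁)), EuclideanSpace.single j 1)) ⬝ᵥ
          ((((-Cm) - (2 * ε) • 1)⁻¹) *ᵥ
           (fun j => B (U, 0) ((0 : EuclideanSpace ℝ (Fin d₁)), EuclideanSpace.single j 1)))) / 2
      + ε * ‖U‖ ^ 2 with hKfun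
    clear_value Kfun
    have hmain : ∀ (U : EuclideanSpace ℝ (Fin d₁)) (ε η : ℝ), 0 < ε → 2 * ε < lam → 0 < η →
        ∃ δ : ℝ, 0 < δ ∧ δ ≤ η ∧
          0 ≤ δ * D (xs, ys) (U, (0 : EuclideanSpace ℝ (Fin d₂))) + δ ^ 2 * Kfun U ε := by
      intro U ε η hε hε2 hη
      rw [hKfun]
      exact main_est F2 xs ys (D (xs, ys)) B hBsymm hquad hDy δ₀ hδ₀ h hh0 hhtend hkey2
        Cm hYYe lam hNpd U ε η hε hε2 hη
    have hcv0 : ∀ U : EuclideanSpace ℝ (Fin d₁),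
        D (xs, ys) (U, (0 : EuclideanSpace ℝ (Fin d₂))) = 0 := by
      have hge : ∀ U : EuclideanSpace ℝ (Fin d₁),
          0 ≤ D (xs, ys) (U, (0 : EuclideanSpace ℝ (Fin d₂))) := by
        intro U
        refine small_delta_nonneg (K := Kfun U (lam / 4)) fun η hη => ?_
        exact hmain U (lam / 4) η (by linarith) (by linarith) hη
      intro U
      have h2 := hge (-U)
      have h3 : D (xs, ys) ((-U : EuclideanSpace ℝ (Fin d₁)),
          (0 : EuclideanSpace ℝ (Fin d₂))) = -D (xs, ys) (U, (0 : EuclideanSpace ℝ (Fin d₂))) := by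
        rw [show ((-U : EuclideanSpace ℝ (Fin d₁)), (0 : EuclideanSpace ℝ (Fin d₂)))
            = -((U, (0 : EuclideanSpace ℝ (Fin d₂)))) from by rw [Prod.neg_mk, neg_zero],
          map_neg]
      rw [h3] at h2
      linarith [hge U]
    have hK0 : ∀ (U : EuclideanSpace ℝ (Fin d₁)) (ε : ℝ), 0 < ε → 2 * ε < lam →
        0 ≤ Kfun U ε := by
      intro U ε hε hε2
      obtain ⟨δ, hδ0, _, hineq⟩ := hmain U ε 1 hε hε2 one_pos
      rw [hcv0 U] at hineq
      exact delta_sq_nonneg δ hδ0 hineq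
    have hnCdet : IsUnit (-Cm).det := isUnit_iff_ne_zero.mpr (ne_of_gt hPD.det_pos)
    have hS3 : ∀ U : EuclideanSpace ℝ (Fin d₁),
        0 ≤ B (U, (0 : EuclideanSpace ℝ (Fin d₂))) (U, 0) / 2
          + ((fun j => B (U, 0) ((0 : EuclideanSpace ℝ (Fin d₁)), EuclideanSpace.single j 1)) ⬝ᵥ
             ((-Cm)⁻¹ *ᵥ
              (fun j => B (U, 0) ((0 : EuclideanSpace ℝ (Fin d₁)),
                EuclideanSpace.single j 1)))) / 2 := by
      intro U
      exact limit_est Cm hnCdet (B (U, (0 : EuclideanSpace ℝ (Fin d₂))) (U, 0))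
        (fun j => B (U, 0) ((0 : EuclideanSpace ℝ (Fin d₁)), EuclideanSpace.single j 1))
        (‖U‖ ^ 2) lam hlam (fun ε hε hε2 => by
          have h9 := hK0 U ε hε hε2
          rwa [hKfun] at h9)
    have hCdet : IsUnit Cm.det := by
      have h2 : (-Cm).det ≠ 0 := ne_of_gt hPD.det_pos
      rw [Matrix.det_neg] at h2
      refine isUnit_iff_ne_zero.mpr fun h3 => h2 ?_
      rw [h3, mul_zero]
    have hCinvneg : (-Cm)⁻¹ = -(Cm⁻¹) := by
      apply Matrix.inv_eq_right_inv
      rw [neg_mul_neg, Matrix.mul_nonsing_inv _ hCdet]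
    have hCT : Cmᵀ = Cm := by
      have h2 := hCherm
      rwa [Matrix.IsHermitian, Matrix.conjTranspose_eq_transpose_of_trivial] at h2
    have hAT : Amᵀ = Am := by
      ext i j
      rw [Matrix.transpose_apply, hXXe, hXXe]
      exact hBsymm _ _
    have hSherm : (Am - Bm * Cm⁻¹ * Bmᵀ).IsHermitian := by
      rw [Matrix.IsHermitian, Matrix.conjTranspose_eq_transpose_of_trivial,
        Matrix.transpose_sub, hAT, Matrix.transpose_mul, Matrix.transpose_mul,
        Matrix.transpose_transpose, Matrix.transpose_nonsing_inv, hCT,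
        Matrix.mul_assoc]
    refine PosSemidef.of_dotProduct_mulVec_nonneg hSherm fun u => ?_
    have hstar : star u = u := funext fun i => star_trivial _
    rw [hstar]
    set U : EuclideanSpace ℝ (Fin d₁) := (WithLp.equiv 2 (Fin d₁ → ℝ)).symm u with hUdef
    have hav : B (U, (0 : EuclideanSpace ℝ (Fin d₂))) (U, 0) = u ⬝ᵥ (Am *ᵥ u) := by
      have hBE := bilin_expand B inl' inl' U U
      simp only [hinl', ContinuousLinearMap.inl_apply] at hBE
      rw [hBE, dot_expand]
      exact Finset.sum_congr rfl fun i _ => Finset.sum_congr rfl fun j _ => by rw [hXXe]; rfl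
    have hbvT : (fun j => B (U, (0 : EuclideanSpace ℝ (Fin d₂)))
        ((0 : EuclideanSpace ℝ (Fin d₁)), EuclideanSpace.single j 1)) = Bmᵀ *ᵥ u := by
      funext j
      have hT := euclid_expand ((B.comp inl').flip
        ((0 : EuclideanSpace ℝ (Fin d₁)), EuclideanSpace.single j 1)) U
      simp only [ContinuousLinearMap.flip_apply, ContinuousLinearMap.comp_apply, hinl',
        ContinuousLinearMap.inl_apply, smul_eq_mul] at hT
      show B (U, (0 : EuclideanSpace ℝ (Fin d₂)))
        ((0 : EuclideanSpace ℝ (Fin d₁)), EuclideanSpace.single j 1) = (Bmᵀ *ᵥ u) j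
      rw [Matrix.mulVec_transpose, hT]
      show _ = ∑ i, u i * Bm i j
      exact Finset.sum_congr rfl fun i _ => by rw [hXYe]; rfl
    have hquadS : u ⬝ᵥ ((Bm * Cm⁻¹ * Bmᵀ) *ᵥ u)
        = (Bmᵀ *ᵥ u) ⬝ᵥ (Cm⁻¹ *ᵥ (Bmᵀ *ᵥ u)) := by
      rw [← Matrix.mulVec_mulVec, ← Matrix.mulVec_mulVec, Matrix.dotProduct_mulVec,
        ← Matrix.mulVec_transpose]
    have h1 := hS3 U
    rw [hav, hbvT, hCinvneg, Matrix.neg_mulVec, dotProduct_neg] at h1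
    rw [Matrix.sub_mulVec, dotProduct_sub, hquadS]
    linarith
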